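/- Let n ≥ 1 and let Ω ⊂ ℝ^{n+1} be a bounded open set whose boundary ∂Ω is n-dimensional ADR with constant C₀, and suppose every connected component Ω_j of Ω has n-dimensional ADR boundary with constant C₀. Fix one component Ω_{j₀}, and let μ be a finite Borel measure on ∂Ω carried by ∂Ω_{j₀} (i.e., μ(∂Ω ∖ ∂Ω_{j₀}) = 0). Assume there are C₁ ≥ 1 and θ > 0 such that for every z ∈ ∂Ω_{j₀} and every 0 < ρ < diam ∂Ω_{j₀}, setting Δ_* := B(z,ρ) ∩ ∂Ω_{j₀}, one has μ(A') ≤ C₁ (H^n(A')/H^n(Δ_*))^θ μ(Δ_*) for every Borel A' ⊆ Δ_*. Then there is C₂, depending only on n, C₀, C₁ and θ, such that for every x ∈ ∂Ω and every 0 < r < min{diam ∂Ω_{j₀}, (1/2) diam ∂Ω}, setting Δ := B(x,r) ∩ ∂Ω and 2Δ := B(x,2r) ∩ ∂Ω, one has μ(A) ≤ C₂ (H^n(A)/H^n(Δ))^θ μ(2Δ) for every Borel A ⊆ Δ. -/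

import Mathlib

open Metric MeasureTheory Set
open scoped NNReal ENNReal

noncomputable section

/-- `ℝ^{n+1}` -/
abbrev Euc (n : ℕ) : Type := EuclideanSpace ℝ (Fin (n + 1))

/-- The distance between two subsets of `ℝ^{n+1}`. -/
def sDist {n : ℕ} (A B : Set (Euc n)) : ℝ := sInf (Set.image2 dist A B)

/-- `E ⊆ ℝ^{n+1}` is an `n`-dimensional Ahlfors-David regular set with constant `C`. -/
def IsADR (n : ℕ) (E : Set (Euc n)) (C : ℝ) : Prop :=
  IsClosed E ∧ 1 ≤ C ∧ ∀ x ∈ E, ∀ r : ℝ, 0 < r → ENNReal.ofReal r < EMetric.diam E →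
    ENNReal.ofReal (C⁻¹ * r ^ n) ≤ μH[(n : ℝ)] (E ∩ ball x r) ∧
      μH[(n : ℝ)] (E ∩ ball x r) ≤ ENNReal.ofReal (C * r ^ n)


/-- Cardinality bound for an `r/2`-separated finset in a ball of radius `r`. -/
lemma sep_card_bound (n : ℕ) (x : Euc n) (r : ℝ) (hr : 0 < r) (T : Finset (Euc n))
    (hT : ∀ c ∈ T, c ∈ ball x r)
    (hsep : ∀ a ∈ T, ∀ b ∈ T, a ≠ b → r / 2 ≤ dist a b) :
    T.card ≤ 5 ^ (n + 1) := by
  classical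
  set f : Euc n → Euc n := fun c => (2 / r) • (c - x) with hf
  have hinj : Function.Injective f := by
    intro a b hab
    have h2r : (2 / r) ≠ 0 := by positivity
    have := smul_right_injective (Euc n) h2r hab
    exact sub_left_injective this
  have hcard : (T.image f).card = T.card := Finset.card_image_of_injective _ hinj
  have hnorm : ∀ c, ‖f c‖ = (2 / r) * dist c x := by
    intro c
    rw [hf]
    simp only [norm_smul, Real.norm_eq_abs, abs_of_pos (by positivity : (0:ℝ) < 2 / r)]
    rw [dist_eq_norm]
  have := Besicovitch.card_le_of_separated (E := Euc n) (T.image f)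
    (fun c hc => by
      obtain ⟨a, ha, rfl⟩ := Finset.mem_image.1 hc
      have : dist a x < r := mem_ball.1 (hT a ha)
      rw [hnorm]
      rw [div_mul_eq_mul_div, div_le_iff₀ hr]
      nlinarith)
    (fun c hc d hd hcd => by
      obtain ⟨a, ha, rfl⟩ := Finset.mem_image.1 hc
      obtain ⟨b, hb, rfl⟩ := Finset.mem_image.1 hd
      have hab : a ≠ b := fun h => hcd (by rw [h])
      have hs := hsep a ha b hb hab
      have : f a - f b = (2 / r) • (a - b) := by rw [hf]; rw [← smul_sub]; congr 1; abel
      rw [this, norm_smul, Real.norm_eq_abs, abs_of_pos (by positivity : (0:ℝ) < 2 / r)]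
      rw [← dist_eq_norm]
      rw [div_mul_eq_mul_div, le_div_iff₀ hr]
      nlinarith)
  rw [hcard, finrank_euclideanSpace_fin] at this
  exact this

/-- Bounded-cardinality covering of any subset of a ball by balls of half radius
centered in the set. -/
lemma cover_lemma (n : ℕ) (x : Euc n) (r : ℝ) (hr : 0 < r) (S : Set (Euc n))
    (hS : S ⊆ ball x r) :
    ∃ T : Finset (Euc n), ↑T ⊆ S ∧ T.card ≤ 5 ^ (n + 1) ∧
      S ⊆ ⋃ z ∈ T, ball z (r / 2) := by
  classical
  set N := 5 ^ (n + 1) with hN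
  set P : ℕ → Prop := fun k => ∃ T : Finset (Euc n), ↑T ⊆ S ∧
    (∀ a ∈ T, ∀ b ∈ T, a ≠ b → r / 2 ≤ dist a b) ∧ T.card = k with hP
  have hP0 : P 0 := ⟨∅, by simp⟩
  have hcardle : ∀ k, P k → k ≤ N := by
    rintro k ⟨T, hTS, hsep, rfl⟩
    exact sep_card_bound n x r hr T (fun c hc => hS (hTS hc)) hsep
  set k₀ := Nat.findGreatest P N with hk₀
  obtain ⟨T, hTS, hsep, hTcard⟩ : P k₀ := Nat.findGreatest_spec (Nat.zero_le N) hP0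
  refine ⟨T, hTS, hTcard ▸ hcardle _ ⟨T, hTS, hsep, hTcard⟩, ?_⟩
  intro s hs
  by_contra hcov
  simp only [mem_iUnion, mem_ball, not_exists, not_lt] at hcov
  have hsT : s ∉ T := fun h => by
    have := hcov s h
    simp at this
    linarith
  have hP1 : P (k₀ + 1) := by
    refine ⟨insert s T, ?_, ?_, ?_⟩
    · intro a ha
      rcases Finset.mem_insert.1 ha with h | h
      · exact h ▸ hs
      · exact hTS h
    · intro a ha b hb hab
      rcases Finset.mem_insert.1 ha with h | h <;> rcases Finset.mem_insert.1 hb with h' | h'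
      · exact absurd (h.trans h'.symm) hab
      · rw [h]; exact hcov b h'
      · rw [h', dist_comm]; exact hcov a h
      · exact hsep a h b h' hab
    · rw [Finset.card_insert_of_notMem hsT, hTcard]
  exact absurd (Nat.le_findGreatest (hcardle _ hP1) hP1) (by omega)

/-- The frontier of a connected component of an open set is a subset of the frontier. -/
lemma frontier_comp_subset {n : ℕ} {Ω : Set (Euc n)} (hΩ : IsOpen Ω) (z : Euc n) :
    frontier (connectedComponentIn Ω z) ⊆ frontier Ω := by
  set U := connectedComponentIn Ω z with hU
  have hUo : IsOpen U := hΩ.connectedComponentIn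
  intro y hy
  rw [hUo.frontier_eq] at hy
  obtain ⟨hyc, hyU⟩ := hy
  have hycΩ : y ∈ closure Ω := closure_mono (connectedComponentIn_subset Ω z) hyc
  have hyΩ : y ∉ Ω := by
    intro hyΩ
    have hVo : IsOpen (connectedComponentIn Ω y) := hΩ.connectedComponentIn
    have hyV : y ∈ connectedComponentIn Ω y := mem_connectedComponentIn hyΩ
    obtain ⟨w, hwV, hwU⟩ := mem_closure_iff.1 hyc _ hVo hyV
    have h1 : connectedComponentIn Ω y = connectedComponentIn Ω w := connectedComponentIn_eq hwV
    have h2 : connectedComponentIn Ω z = connectedComponentIn Ω w :=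
      connectedComponentIn_eq (show w ∈ connectedComponentIn Ω z from hU ▸ hwU)
    exact hyU (show y ∈ U from by rw [hU, h2, ← h1]; exact hyV)
  rw [hΩ.frontier_eq]
  exact ⟨hycΩ, hyΩ⟩
theorem weak_Ainfty_from_component_Ainfty
    (n : ℕ) (hn : 1 ≤ n) (C₀ C₁ θ : ℝ) (hC₀ : 1 ≤ C₀) (hC₁ : 1 ≤ C₁) (hθ : 0 < θ) :
    ∃ C₂ : ℝ, 0 < C₂ ∧
      ∀ Ω : Set (Euc n), IsOpen Ω → Bornology.IsBounded Ω → Ω.Nonempty →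
        IsADR n (frontier Ω) C₀ →
        (∀ z ∈ Ω, IsADR n (frontier (connectedComponentIn Ω z)) C₀) →
      ∀ Ωj : Set (Euc n), (∃ z ∈ Ω, Ωj = connectedComponentIn Ω z) →
      ∀ μ : Measure (Euc n), IsFiniteMeasure μ →
        μ (frontier Ω)ᶜ = 0 → μ (frontier Ω \ frontier Ωj) = 0 →
        (∀ z ∈ frontier Ωj, ∀ ρ : ℝ, 0 < ρ → ρ < Metric.diam (frontier Ωj) →
          ∀ A' : Set (Euc n), MeasurableSet A' → A' ⊆ ball z ρ ∩ frontier Ωj →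
            μ A' ≤ ENNReal.ofReal C₁ *
              (μH[(n : ℝ)] A' / μH[(n : ℝ)] (ball z ρ ∩ frontier Ωj)) ^ θ *
              μ (ball z ρ ∩ frontier Ωj)) →
      ∀ x ∈ frontier Ω, ∀ r : ℝ, 0 < r →
        r < min (Metric.diam (frontier Ωj)) (Metric.diam (frontier Ω) / 2) →
        ∀ A : Set (Euc n), MeasurableSet A → A ⊆ ball x r ∩ frontier Ω →
          μ A ≤ ENNReal.ofReal C₂ *
            (μH[(n : ℝ)] A / μH[(n : ℝ)] (ball x r ∩ frontier Ω)) ^ θ *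
            μ (ball x (2 * r) ∩ frontier Ω) := by
  classical
  have hC₀0 : (0:ℝ) < C₀ := by linarith
  have hC₁0 : (0:ℝ) < C₁ := by linarith
  set K : ℝ := C₀ ^ 2 * 2 ^ n with hK
  have hK0 : 0 < K := by positivity
  refine ⟨(5:ℝ) ^ (n + 1) * C₁ * K ^ θ, by positivity, ?_⟩
  intro Ω hΩo hΩb hΩne hADR hADRc Ωj hΩjex μ hμfin hμc hμcar hAinf x hx r hr hrlt A hAm hAsub
  obtain ⟨z₀, hz₀Ω, hΩjeq⟩ := hΩjex
  have hFjF : frontier Ωj ⊆ frontier Ω := by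
    rw [hΩjeq]; exact frontier_comp_subset hΩo z₀
  have hADRj : IsADR n (frontier Ωj) C₀ := by rw [hΩjeq]; exact hADRc z₀ hz₀Ω
  have hrj : r < Metric.diam (frontier Ωj) := (lt_min_iff.1 hrlt).1
  have hrF2 : r < Metric.diam (frontier Ω) / 2 := (lt_min_iff.1 hrlt).2
  have hFb : Bornology.IsBounded (frontier Ω) :=
    hΩb.closure.subset frontier_subset_closure
  have hFjb : Bornology.IsBounded (frontier Ωj) := hFb.subset hFjF
  have hediamj : ENNReal.ofReal (r / 2) < EMetric.diam (frontier Ωj) := by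
    rw [show EMetric.diam (frontier Ωj) = Metric.ediam (frontier Ωj) from rfl,
      ENNReal.ofReal_lt_iff_lt_toReal (by positivity) hFjb.ediam_ne_top]
    have h' : Metric.diam (frontier Ωj) = (Metric.ediam (frontier Ωj)).toReal := rfl
    linarith [h' ▸ hrj]
  have hediamF : ENNReal.ofReal r < EMetric.diam (frontier Ω) := by
    rw [show EMetric.diam (frontier Ω) = Metric.ediam (frontier Ω) from rfl,
      ENNReal.ofReal_lt_iff_lt_toReal hr.le hFb.ediam_ne_top]
    have : Metric.diam (frontier Ω) = (Metric.ediam (frontier Ω)).toReal := rfl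
    linarith [this ▸ hrF2]
  have hΔup : μH[(n : ℝ)] (ball x r ∩ frontier Ω) ≤ ENNReal.ofReal (C₀ * r ^ n) := by
    rw [inter_comm]; exact (hADR.2.2 x hx r hr hediamF).2
  set S := A ∩ frontier Ωj with hSdef
  have hSball : S ⊆ ball x r := fun y hy => (hAsub hy.1).1
  obtain ⟨T, hTS, hTcard, hTcov⟩ := cover_lemma n x r hr S hSball
  have hμAS : μ A ≤ μ S := by
    have h0 : μ (A \ frontier Ωj) = 0 :=
      measure_mono_null (Set.diff_subset_diff_left (fun y hy => (hAsub hy).2)) hμcar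
    calc μ A ≤ μ (S ∪ A \ frontier Ωj) := measure_mono (fun y hy => by
          by_cases h : y ∈ frontier Ωj
          · exact Set.mem_union_left _ ⟨hy, h⟩
          · exact Set.mem_union_right _ ⟨hy, h⟩)
      _ ≤ μ S + μ (A \ frontier Ωj) := measure_union_le _ _
      _ = μ S := by rw [h0, add_zero]
  set Q : ℝ≥0∞ := (μH[(n : ℝ)] A / μH[(n : ℝ)] (ball x r ∩ frontier Ω)) ^ θ with hQ
  set M : ℝ≥0∞ := μ (ball x (2 * r) ∩ frontier Ω) with hM
  have key : ∀ z ∈ T, μ (S ∩ ball z (r / 2)) ≤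
      ENNReal.ofReal C₁ * (ENNReal.ofReal (K ^ θ) * Q) * M := by
    intro z hzT
    have hzS : z ∈ S := hTS hzT
    have hzFj : z ∈ frontier Ωj := hzS.2
    have hzball : z ∈ ball x r := hSball hzS
    have hmeas : MeasurableSet (S ∩ ball z (r / 2)) :=
      ((hAm.inter isClosed_frontier.measurableSet).inter measurableSet_ball)
    have hsub : S ∩ ball z (r / 2) ⊆ ball z (r / 2) ∩ frontier Ωj :=
      fun y hy => ⟨hy.2, hy.1.2⟩
    have h1 := hAinf z hzFj (r / 2) (by positivity) (by linarith) (S ∩ ball z (r / 2)) hmeas hsub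
    have hlow : ENNReal.ofReal (C₀⁻¹ * (r / 2) ^ n) ≤
        μH[(n : ℝ)] (ball z (r / 2) ∩ frontier Ωj) := by
      rw [inter_comm]
      exact (hADRj.2.2 z hzFj (r / 2) (by positivity) hediamj).1
    have hμ2 : μ (ball z (r / 2) ∩ frontier Ωj) ≤ M := by
      apply measure_mono
      intro y hy
      refine ⟨?_, hFjF hy.2⟩
      have h3 : dist y x ≤ dist y z + dist z x := dist_triangle _ _ _
      have h4 : dist y z < r / 2 := mem_ball.1 hy.1
      have h5 : dist z x < r := mem_ball.1 hzball
      exact mem_ball.2 (by linarith)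
    have hp1 : (0:ℝ) < C₀⁻¹ * (r / 2) ^ n := by positivity
    have hp2 : (0:ℝ) < C₀ * r ^ n := by positivity
    have hc : (ENNReal.ofReal (C₀⁻¹ * (r / 2) ^ n))⁻¹ =
        ENNReal.ofReal K * (ENNReal.ofReal (C₀ * r ^ n))⁻¹ := by
      rw [← ENNReal.ofReal_inv_of_pos hp1, ← ENNReal.ofReal_inv_of_pos hp2,
        ← ENNReal.ofReal_mul hK0.le]
      congr 1
      rw [hK]
      field_simp
      rw [← mul_pow]; norm_num
    have hdiv : μH[(n : ℝ)] (S ∩ ball z (r / 2)) /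
        μH[(n : ℝ)] (ball z (r / 2) ∩ frontier Ωj) ≤
        ENNReal.ofReal K *
          (μH[(n : ℝ)] A / μH[(n : ℝ)] (ball x r ∩ frontier Ω)) := by
      have d1 : μH[(n : ℝ)] (S ∩ ball z (r / 2)) /
          μH[(n : ℝ)] (ball z (r / 2) ∩ frontier Ωj) ≤
          μH[(n : ℝ)] A / ENNReal.ofReal (C₀⁻¹ * (r / 2) ^ n) :=
        ENNReal.div_le_div (measure_mono (fun y hy => hy.1.1)) hlow
      have d2 : μH[(n : ℝ)] A / ENNReal.ofReal (C₀⁻¹ * (r / 2) ^ n) =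
          ENNReal.ofReal K * (μH[(n : ℝ)] A / ENNReal.ofReal (C₀ * r ^ n)) := by
        rw [div_eq_mul_inv, hc, div_eq_mul_inv]; ring
      have d3 : μH[(n : ℝ)] A / ENNReal.ofReal (C₀ * r ^ n) ≤
          μH[(n : ℝ)] A / μH[(n : ℝ)] (ball x r ∩ frontier Ω) :=
        ENNReal.div_le_div le_rfl hΔup
      calc μH[(n : ℝ)] (S ∩ ball z (r / 2)) /
            μH[(n : ℝ)] (ball z (r / 2) ∩ frontier Ωj)
          ≤ μH[(n : ℝ)] A / ENNReal.ofReal (C₀⁻¹ * (r / 2) ^ n) := d1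
        _ = ENNReal.ofReal K * (μH[(n : ℝ)] A / ENNReal.ofReal (C₀ * r ^ n)) := d2
        _ ≤ ENNReal.ofReal K *
            (μH[(n : ℝ)] A / μH[(n : ℝ)] (ball x r ∩ frontier Ω)) :=
          mul_le_mul' le_rfl d3
    have hpow : (μH[(n : ℝ)] (S ∩ ball z (r / 2)) /
        μH[(n : ℝ)] (ball z (r / 2) ∩ frontier Ωj)) ^ θ ≤
        ENNReal.ofReal (K ^ θ) * Q := by
      calc (μH[(n : ℝ)] (S ∩ ball z (r / 2)) /
            μH[(n : ℝ)] (ball z (r / 2) ∩ frontier Ωj)) ^ θ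
          ≤ (ENNReal.ofReal K *
            (μH[(n : ℝ)] A / μH[(n : ℝ)] (ball x r ∩ frontier Ω))) ^ θ :=
          ENNReal.rpow_le_rpow hdiv hθ.le
        _ = ENNReal.ofReal K ^ θ * Q := ENNReal.mul_rpow_of_nonneg _ _ hθ.le
        _ = ENNReal.ofReal (K ^ θ) * Q := by rw [ENNReal.ofReal_rpow_of_pos hK0]
    calc μ (S ∩ ball z (r / 2)) ≤ ENNReal.ofReal C₁ *
          (μH[(n : ℝ)] (S ∩ ball z (r / 2)) /
            μH[(n : ℝ)] (ball z (r / 2) ∩ frontier Ωj)) ^ θ *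
          μ (ball z (r / 2) ∩ frontier Ωj) := h1
      _ ≤ ENNReal.ofReal C₁ * (ENNReal.ofReal (K ^ θ) * Q) * M :=
        mul_le_mul' (mul_le_mul' le_rfl hpow) hμ2
  have hsum : μ S ≤ (T.card : ℝ≥0∞) * (ENNReal.ofReal C₁ * (ENNReal.ofReal (K ^ θ) * Q) * M) := by
    calc μ S ≤ μ (⋃ z ∈ T, S ∩ ball z (r / 2)) := measure_mono (fun y hy => by
          obtain ⟨i, hiT, hib⟩ := mem_iUnion₂.1 (hTcov hy)
          exact mem_iUnion₂.2 ⟨i, hiT, hy, hib⟩)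
      _ ≤ ∑ z ∈ T, μ (S ∩ ball z (r / 2)) := measure_biUnion_finset_le T _
      _ ≤ ∑ _z ∈ T, (ENNReal.ofReal C₁ * (ENNReal.ofReal (K ^ θ) * Q) * M) :=
        Finset.sum_le_sum key
      _ = (T.card : ℝ≥0∞) * (ENNReal.ofReal C₁ * (ENNReal.ofReal (K ^ θ) * Q) * M) := by
        rw [Finset.sum_const, nsmul_eq_mul]
  have hfinal : μ A ≤ ((5 ^ (n + 1) : ℕ) : ℝ≥0∞) *
      (ENNReal.ofReal C₁ * (ENNReal.ofReal (K ^ θ) * Q) * M) :=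
    hμAS.trans (hsum.trans (mul_le_mul' (Nat.cast_le.2 hTcard) le_rfl))
  refine hfinal.trans (le_of_eq ?_)
  rw [ENNReal.ofReal_mul (by positivity : (0:ℝ) ≤ (5:ℝ) ^ (n + 1) * C₁),
    ENNReal.ofReal_mul (by positivity : (0:ℝ) ≤ (5:ℝ) ^ (n + 1)),
    show ENNReal.ofReal ((5:ℝ) ^ (n + 1)) = ((5 ^ (n + 1) : ℕ) : ℝ≥0∞) by
      rw [show ((5:ℝ)) ^ (n + 1) = ((5 ^ (n + 1) : ℕ) : ℝ) by push_cast; ring,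
        ENNReal.ofReal_natCast]]
  ring
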